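/- Let T ∈ ℂ^{n²×m²}, let Y ∈ ℝ^{m×m} have nonnegative entries with ‖Y‖₁ = Σ_{k1,k2} Y(k1,k2) > 0, and let N_p > 0. Suppose the entries of the random matrix Ỹ are jointly independent with Ỹ(k1,k2) = (‖Y‖₁/N_p)·P(k1,k2), where P(k1,k2) is Poisson-distributed with parameter N_p·Y(k1,k2)/‖Y‖₁. Define X̃ and X by vec(X̃) = T·vec(Ỹ) and vec(X) = T·vec(Y). Then E‖X̃ − X‖_F² = (‖Y‖₁/N_p)·Σ_{k1,k2} S(k1,k2)·Y(k1,k2), where S(k1,k2) is the squared ℓ²-norm of column m·k1 + k2 of T. -/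

import Mathlib

open Complex MeasureTheory ProbabilityTheory Matrix ComplexConjugate
open scoped Kronecker

noncomputable section

/-- Zero-extension of a matrix to integer indices: out-of-range entries are `0`. -/
def zext {n1 n2 : ℕ} (X : Matrix (Fin n1) (Fin n2) ℂ) (t1 t2 : ℤ) : ℂ :=
  if h : 0 ≤ t1 ∧ t1 < (n1 : ℤ) ∧ 0 ≤ t2 ∧ t2 < (n2 : ℤ) then
    X ⟨t1.toNat, by omega⟩ ⟨t2.toNat, by omega⟩
  else 0

/-- Cross-correlation `C_{[X1,X2]}(s1,s2)`, with out-of-range terms taken as `0`. -/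
def crossCorr {n1 n2 : ℕ} (X1 X2 : Matrix (Fin n1) (Fin n2) ℂ) (s1 s2 : ℤ) : ℂ :=
  ∑ t1 : Fin n1, ∑ t2 : Fin n2,
    X1 t1 t2 * conj (zext X2 (((t1 : ℕ) : ℤ) - s1) (((t2 : ℕ) : ℤ) - s2))

/-- Autocorrelation `A_X = C_{[X,X]}`. -/
def autocorr {n1 n2 : ℕ} (X : Matrix (Fin n1) (Fin n2) ℂ) : ℤ → ℤ → ℂ :=
  crossCorr X X

/-- Horizontal concatenation `[X, R]` of two `n × n` matrices. -/
def hcat {n : ℕ} (X R : Matrix (Fin n) (Fin n) ℂ) : Matrix (Fin n) (Fin (2 * n)) ℂ :=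
  Matrix.of fun t1 t2 =>
    if h : (t2 : ℕ) < n then X t1 ⟨t2, h⟩ else R t1 ⟨(t2 : ℕ) - n, by omega⟩

/-- The size `m1 × m2` oversampled discrete Fourier transform of an `n1 × n2` signal. -/
def dft2 {n1 n2 : ℕ} (m1 m2 : ℕ) (Z : Matrix (Fin n1) (Fin n2) ℂ) (k1 k2 : ℕ) : ℂ :=
  ∑ t1 : Fin n1, ∑ t2 : Fin n2,
    Z t1 t2 * Complex.exp (-(2 * (Real.pi : ℂ) * Complex.I) *
      (((t1 : ℕ) : ℂ) * (k1 : ℂ) / (m1 : ℂ) + ((t2 : ℕ) : ℂ) * (k2 : ℂ) / (m2 : ℂ)))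

/-- Quadrant cross-correlation `C°_{[X,R]}(i,j) = C_{[X,R]}(i-(n-1), j-(n-1))`. -/
def quadCC {n : ℕ} (X R : Matrix (Fin n) (Fin n) ℂ) : Matrix (Fin n) (Fin n) ℂ :=
  Matrix.of fun i j =>
    crossCorr X R (((i : ℕ) : ℤ) - ((n : ℤ) - 1)) (((j : ℕ) : ℤ) - ((n : ℤ) - 1))

/-- Columnwise vectorization: the pair `(j, i)` (column `j`, row `i`) indexes entry `X i j`. -/
def vecM {a b : ℕ} (X : Matrix (Fin a) (Fin b) ℂ) : Fin b × Fin a → ℂ :=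
  fun p => X p.2 p.1

/-- The matrix `M_R` satisfying `vec (C°_{[X,R]}) = M_R • vec X` (columnwise vectorization). -/
def MR {n : ℕ} (R : Matrix (Fin n) (Fin n) ℂ) :
    Matrix (Fin n × Fin n) (Fin n × Fin n) ℂ :=
  Matrix.of fun p q =>
    conj (zext R (((q.2 : ℕ) : ℤ) - ((p.2 : ℕ) : ℤ) + ((n : ℤ) - 1))
      (((q.1 : ℕ) : ℤ) - ((p.1 : ℕ) : ℤ) + ((n : ℤ) - 1)))

/-- `P1 · F_LA^*`: row `t ∈ {0,…,n-1}` corresponds to the column `t - (n-1)` of `F_LA`. -/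
def P1FLA (n m : ℕ) : Matrix (Fin n) (Fin m) ℂ :=
  Matrix.of fun t k =>
    Complex.exp ((2 * (Real.pi : ℂ) * Complex.I) * ((k : ℕ) : ℂ) *
      (((t : ℕ) : ℂ) - ((n : ℂ) - 1)) / (m : ℂ))

/-- `P2 · F_RA^*`: row `t ∈ {0,…,n-1}` corresponds to the column `t - (2n-1)` of `F_RA`. -/
def P2FRA (n m : ℕ) : Matrix (Fin n) (Fin m) ℂ :=
  Matrix.of fun t k =>
    Complex.exp ((2 * (Real.pi : ℂ) * Complex.I) * ((k : ℕ) : ℂ) *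
      (((t : ℕ) : ℂ) - (2 * (n : ℂ) - 1)) / (m : ℂ))

/-- The referenced-deconvolution matrix
`T_R = (1/m²) · M_R⁻¹ · [(P2 F_RA^*) ⊗ (P1 F_LA^*)]`. -/
def TR {n : ℕ} (m : ℕ) (R : Matrix (Fin n) (Fin n) ℂ) :
    Matrix (Fin n × Fin n) (Fin m × Fin m) ℂ :=
  ((m : ℂ) ^ 2)⁻¹ • ((MR R)⁻¹ * (P2FRA n m ⊗ₖ P1FLA n m))

/-- The reference scaling factor: `S_R(k1,k2)` is the squared ℓ²-norm of the column of `T_R`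
indexed by the pair `(k1, k2)` (i.e. column `m·k1 + k2`). -/
def SR {n : ℕ} (m : ℕ) (R : Matrix (Fin n) (Fin n) ℂ) (k1 k2 : Fin m) : ℝ :=
  ∑ p : Fin n × Fin n, ‖TR m R p (k1, k2)‖ ^ 2

/-- Lower-triangular all-ones matrix `1_L`. -/
def oneL (n : ℕ) : Matrix (Fin n) (Fin n) ℂ :=
  Matrix.of fun i j => if j ≤ i then 1 else 0

/-- First-order difference matrix `D_n` (the inverse of `1_L`). -/
def Dmat (n : ℕ) : Matrix (Fin n) (Fin n) ℂ :=
  Matrix.of fun i j => if i = j then 1 else if (j : ℕ) + 1 = (i : ℕ) then -1 else 0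

/-- Pinhole reference. -/
def pinholeRef (n : ℕ) : Matrix (Fin n) (Fin n) ℂ :=
  Matrix.of fun t1 t2 => if (t1 : ℕ) = n - 1 ∧ (t2 : ℕ) = n - 1 then 1 else 0

/-- Slit reference. -/
def slitRef (n : ℕ) : Matrix (Fin n) (Fin n) ℂ :=
  Matrix.of fun _ t2 => if (t2 : ℕ) = n - 1 then 1 else 0

/-- Block reference. -/
def blockRef (n : ℕ) : Matrix (Fin n) (Fin n) ℂ :=
  Matrix.of fun _ _ => 1


lemma exp_tsum' (r : ℝ) : ∑' j : ℕ, r ^ j / j.factorial = Real.exp r := by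
  rw [Real.exp_eq_exp_ℝ, NormedSpace.exp_eq_tsum_div]

lemma summable0 (r : ℝ) : Summable (fun j : ℕ => r ^ j / j.factorial) :=
  Real.summable_pow_div_factorial r

lemma shift1 (r : ℝ) (j : ℕ) :
    ((j : ℝ) + 1) * (r ^ (j + 1) / (j + 1).factorial) = r * (r ^ j / j.factorial) := by
  have h : ((j.factorial : ℝ)) ≠ 0 := Nat.cast_ne_zero.2 j.factorial_ne_zero
  rw [Nat.factorial_succ]; push_cast; field_simp; ring

lemma summable1 (r : ℝ) : Summable (fun j : ℕ => (j : ℝ) * (r ^ j / j.factorial)) := by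
  rw [← summable_nat_add_iff 1]
  simpa [shift1 r] using (summable0 r).mul_left r

lemma tsum1 (r : ℝ) : ∑' j : ℕ, (j : ℝ) * (r ^ j / j.factorial) = r * Real.exp r := by
  rw [Summable.tsum_eq_zero_add (summable1 r)]
  simp [shift1 r, tsum_mul_left, exp_tsum' r]

lemma shift2 (r : ℝ) (j : ℕ) :
    ((j : ℝ) + 1) ^ 2 * (r ^ (j + 1) / (j + 1).factorial) =
      r * ((j : ℝ) * (r ^ j / j.factorial)) + r * (r ^ j / j.factorial) := by
  have h : ((j.factorial : ℝ)) ≠ 0 := Nat.cast_ne_zero.2 j.factorial_ne_zero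
  rw [Nat.factorial_succ]; push_cast; field_simp; ring

lemma summable2 (r : ℝ) : Summable (fun j : ℕ => (j : ℝ) ^ 2 * (r ^ j / j.factorial)) := by
  rw [← summable_nat_add_iff 1]
  simpa [shift2 r] using ((summable1 r).mul_left r).add ((summable0 r).mul_left r)

lemma tsum2 (r : ℝ) :
    ∑' j : ℕ, (j : ℝ) ^ 2 * (r ^ j / j.factorial) = (r ^ 2 + r) * Real.exp r := by
  rw [Summable.tsum_eq_zero_add (summable2 r)]
  simp only [Nat.cast_add, Nat.cast_one, shift2 r]
  rw [Summable.tsum_add ((summable1 r).mul_left r) ((summable0 r).mul_left r),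
    tsum_mul_left, tsum_mul_left, tsum1 r, exp_tsum' r]
  simp
  ring

lemma poisson_centered (r : ℝ) (hr : 0 ≤ r) :
    Summable (fun j : ℕ => |(j : ℝ) - r| * (Real.exp (-r) * r ^ j / j.factorial)) ∧
    Summable (fun j : ℕ => |((j : ℝ) - r) ^ 2| * (Real.exp (-r) * r ^ j / j.factorial)) ∧
    (∑' j : ℕ, (Real.exp (-r) * r ^ j / j.factorial) * ((j : ℝ) - r) = 0) ∧
    (∑' j : ℕ, (Real.exp (-r) * r ^ j / j.factorial) * ((j : ℝ) - r) ^ 2 = r) := by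
  have hepos : (0:ℝ) < Real.exp (-r) := Real.exp_pos _
  set e := Real.exp (-r) with he
  have hw : ∀ j : ℕ, e * r ^ j / (j.factorial : ℝ) = e * (r ^ j / j.factorial) :=
    fun j => mul_div_assoc _ _ _
  have hu : ∀ j : ℕ, (0:ℝ) ≤ r ^ j / j.factorial :=
    fun j => div_nonneg (pow_nonneg hr j) (Nat.cast_nonneg _)
  have hE : e * Real.exp r = 1 := by rw [he, ← Real.exp_add]; simp
  have S0 : Summable (fun j : ℕ => e * (r ^ j / j.factorial)) := (summable0 r).mul_left e
  have S1 : Summable (fun j : ℕ => e * ((j:ℝ) * (r ^ j / j.factorial))) := (summable1 r).mul_left e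
  have S2 : Summable (fun j : ℕ => e * ((j:ℝ)^2 * (r ^ j / j.factorial))) := (summable2 r).mul_left e
  have habs : ∀ j : ℕ, |(j:ℝ) - r| ≤ (j:ℝ) + r := by
    intro j
    have := Nat.cast_nonneg (α := ℝ) j
    rw [abs_le]; constructor <;> linarith
  refine ⟨?_, ?_, ?_, ?_⟩
  · refine Summable.of_nonneg_of_le
      (fun j => mul_nonneg (abs_nonneg _) (by rw [hw j]; positivity))
      (fun j => ?_) (S1.add (S0.mul_left r))
    calc |(j:ℝ) - r| * (e * r ^ j / j.factorial)
        ≤ ((j:ℝ) + r) * (e * r ^ j / j.factorial) := by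
          apply mul_le_mul_of_nonneg_right (habs j)
          rw [hw j]; positivity
      _ = e * ((j:ℝ) * (r ^ j / j.factorial)) + r * (e * (r ^ j / j.factorial)) := by
          rw [hw j]; ring
  · refine Summable.of_nonneg_of_le
      (fun j => mul_nonneg (abs_nonneg _) (by rw [hw j]; positivity))
      (fun j => ?_) ((S2.add ((S1.mul_left (2*r)).add (S0.mul_left (r^2)))))
    have h1 : |((j:ℝ) - r) ^ 2| = ((j:ℝ) - r)^2 := abs_of_nonneg (sq_nonneg _)
    have h2 : ((j:ℝ) - r)^2 ≤ ((j:ℝ) + r)^2 := by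
      rw [← _root_.sq_abs]
      exact pow_le_pow_left₀ (abs_nonneg _) (habs j) 2
    calc |((j:ℝ) - r) ^ 2| * (e * r ^ j / j.factorial)
        ≤ ((j:ℝ) + r)^2 * (e * r ^ j / j.factorial) := by
          rw [h1]
          apply mul_le_mul_of_nonneg_right h2
          rw [hw j]; positivity
      _ = e * ((j:ℝ)^2 * (r ^ j / j.factorial)) +
            ((2*r) * (e * ((j:ℝ) * (r ^ j / j.factorial))) +
              r^2 * (e * (r ^ j / j.factorial))) := by rw [hw j]; ring
  · have hfeq : ∀ j : ℕ, (e * r ^ j / j.factorial) * ((j:ℝ) - r) =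
        e * ((j:ℝ) * (r ^ j / j.factorial)) - r * (e * (r ^ j / j.factorial)) :=
      fun j => by rw [hw j]; ring
    rw [tsum_congr hfeq, Summable.tsum_sub S1 (S0.mul_left r)]
    simp only [tsum_mul_left]
    rw [tsum1 r, exp_tsum' r]
    ring
  · have hfeq : ∀ j : ℕ, (e * r ^ j / j.factorial) * ((j:ℝ) - r)^2 =
        e * ((j:ℝ)^2 * (r ^ j / j.factorial)) - (2*r) * (e * ((j:ℝ) * (r ^ j / j.factorial)))
          + r^2 * (e * (r ^ j / j.factorial)) :=
      fun j => by rw [hw j]; ring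
    rw [tsum_congr hfeq, Summable.tsum_add (S2.sub (S1.mul_left (2*r))) (S0.mul_left (r^2)),
      Summable.tsum_sub S2 (S1.mul_left (2*r))]
    simp only [tsum_mul_left]
    rw [tsum1 r, tsum2 r, exp_tsum' r]
    linear_combination r * hE

/-- Integral of `g ∘ P` for an ℕ-valued random variable with given point masses. -/
lemma nat_rv_integral {Ω : Type*} [MeasurableSpace Ω] (μ : Measure Ω) [IsProbabilityMeasure μ]
    (P : Ω → ℕ) (hP : Measurable P) (g w : ℕ → ℝ) (hwnn : ∀ j, 0 ≤ w j)
    (hw : ∀ j, μ {ω | P ω = j} = ENNReal.ofReal (w j))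
    (hs : Summable (fun j => |g j| * w j)) :
    Integrable (fun ω => g (P ω)) μ ∧ ∫ ω, g (P ω) ∂μ = ∑' j, w j * g j := by
  have hgm : Measurable g := measurable_from_top
  have hν : ∀ j, μ.map P {j} = ENNReal.ofReal (w j) := by
    intro j
    rw [Measure.map_apply hP (measurableSet_singleton j)]
    simpa [Set.preimage, Set.mem_singleton_iff] using hw j
  have hint : Integrable g (μ.map P) := by
    refine ⟨(hgm.stronglyMeasurable).aestronglyMeasurable, ?_⟩
    show (∫⁻ j, (‖g j‖₊ : ENNReal) ∂(μ.map P)) < ⊤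
    rw [lintegral_countable']
    have heq : ∀ j : ℕ, (‖g j‖₊ : ENNReal) * μ.map P {j} = ENNReal.ofReal (|g j| * w j) := by
      intro j
      rw [hν j, ← enorm_eq_nnnorm, ← ofReal_norm, Real.norm_eq_abs,
        ← ENNReal.ofReal_mul (abs_nonneg _)]
    simp only [heq]
    rw [← ENNReal.ofReal_tsum_of_nonneg (fun j => mul_nonneg (abs_nonneg _) (hwnn j)) hs]
    exact ENNReal.ofReal_lt_top
  have hcomp : Integrable (fun ω => g (P ω)) μ :=
    (integrable_map_measure hint.aestronglyMeasurable hP.aemeasurable).mp hint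
  refine ⟨hcomp, ?_⟩
  have h1 : ∫ ω, g (P ω) ∂μ = ∫ j, g j ∂(μ.map P) :=
    (integral_map hP.aemeasurable hint.aestronglyMeasurable).symm
  rw [h1, integral_countable' hint]
  congr 1
  ext j
  rw [measureReal_def, hν j, ENNReal.toReal_ofReal (hwnn j)]
  simp [mul_comm]

/-- Under the Poisson shot noise model, the expected squared recovery error
of `vec(X̃) = T·vec(Ỹ)` equals `(‖Y‖₁/N_p) · Σ_{k1,k2} S(k1,k2)·Y(k1,k2)`, where `S(k1,k2)` is the
squared ℓ²-norm of column `m·k1+k2` of `T`. -/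
theorem expected_poisson_error_formula
    (n m : ℕ) {Ω : Type*} [MeasurableSpace Ω] (μ : Measure Ω) [IsProbabilityMeasure μ]
    (T : Matrix (Fin n × Fin n) (Fin m × Fin m) ℂ)
    (Y : Fin m → Fin m → ℝ) (hYnonneg : ∀ k1 k2, 0 ≤ Y k1 k2)
    (L : ℝ) (hL : L = ∑ k1 : Fin m, ∑ k2 : Fin m, Y k1 k2) (hLpos : 0 < L)
    (Np : ℝ) (hNp : 0 < Np)
    (P : Fin m → Fin m → Ω → ℕ)
    (hPmeas : ∀ k1 k2, Measurable (P k1 k2))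
    (hindep : iIndepFun (fun q : Fin m × Fin m => P q.1 q.2) μ)
    (hpmf : ∀ (k1 k2 : Fin m) (j : ℕ),
      μ {ω | P k1 k2 ω = j} =
        ENNReal.ofReal (Real.exp (-(Np * Y k1 k2 / L)) * (Np * Y k1 k2 / L) ^ j /
          (j.factorial : ℝ))) :
    (∫ ω, ∑ p : Fin n × Fin n,
        ‖(∑ q : Fin m × Fin m, T p q * (((L / Np) * (P q.1 q.2 ω : ℝ) : ℝ) : ℂ)) -
          ∑ q : Fin m × Fin m, T p q * ((Y q.1 q.2 : ℝ) : ℂ)‖ ^ 2 ∂μ) =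
      (L / Np) * ∑ k1 : Fin m, ∑ k2 : Fin m,
        (∑ p : Fin n × Fin n, ‖T p (k1, k2)‖ ^ 2) * Y k1 k2 := by
  have hNe : Np ≠ 0 := ne_of_gt hNp
  have hLe : L ≠ 0 := ne_of_gt hLpos
  set c : ℝ := L / Np with hc
  set r : Fin m × Fin m → ℝ := fun q => Np * Y q.1 q.2 / L with hr
  have hrnn : ∀ q, 0 ≤ r q :=
    fun q => div_nonneg (mul_nonneg hNp.le (hYnonneg _ _)) hLpos.le
  have hcr : ∀ q : Fin m × Fin m, c * r q = Y q.1 q.2 := by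
    intro q
    rw [hc, hr]
    field_simp
  -- moments of the centered variables
  have key : ∀ q : Fin m × Fin m,
      Integrable (fun ω => ((P q.1 q.2 ω : ℝ) - r q)) μ ∧
      (∫ ω, ((P q.1 q.2 ω : ℝ) - r q) ∂μ = 0) ∧
      Integrable (fun ω => ((P q.1 q.2 ω : ℝ) - r q) ^ 2) μ ∧
      (∫ ω, ((P q.1 q.2 ω : ℝ) - r q) ^ 2 ∂μ = r q) := by
    intro q
    obtain ⟨hs1, hs2, hm1, hm2⟩ := poisson_centered (r q) (hrnn q)
    have hw : ∀ j : ℕ, μ {ω | P q.1 q.2 ω = j} =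
        ENNReal.ofReal (Real.exp (-(r q)) * (r q) ^ j / (j.factorial : ℝ)) :=
      fun j => hpmf q.1 q.2 j
    have wnn : ∀ j : ℕ, 0 ≤ Real.exp (-(r q)) * (r q) ^ j / (j.factorial : ℝ) :=
      fun j => div_nonneg (mul_nonneg (Real.exp_pos _).le (pow_nonneg (hrnn q) j))
        (Nat.cast_nonneg _)
    have h1 := nat_rv_integral μ (P q.1 q.2) (hPmeas q.1 q.2)
      (fun j => (j : ℝ) - r q) (fun j => Real.exp (-(r q)) * (r q) ^ j / j.factorial)
      wnn hw hs1
    have h2 := nat_rv_integral μ (P q.1 q.2) (hPmeas q.1 q.2)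
      (fun j => ((j : ℝ) - r q) ^ 2) (fun j => Real.exp (-(r q)) * (r q) ^ j / j.factorial)
      wnn hw hs2
    exact ⟨h1.1, by rw [h1.2]; exact hm1, h2.1, by rw [h2.2]; exact hm2⟩
  -- independence of distinct centered variables
  have hindep2 : ∀ q q' : Fin m × Fin m, q ≠ q' →
      IndepFun (fun ω => ((P q.1 q.2 ω : ℝ) - r q))
        (fun ω => ((P q'.1 q'.2 ω : ℝ) - r q')) μ := by
    intro q q' hne
    exact (hindep.indepFun hne).comp
      (measurable_from_top (f := fun j : ℕ => (j : ℝ) - r q))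
      (measurable_from_top (f := fun j : ℕ => (j : ℝ) - r q'))
  have hprod : ∀ q q' : Fin m × Fin m,
      Integrable (fun ω => ((P q.1 q.2 ω : ℝ) - r q) * ((P q'.1 q'.2 ω : ℝ) - r q')) μ := by
    intro q q'
    by_cases h : q = q'
    · subst h
      have heq : (fun ω => ((P q.1 q.2 ω : ℝ) - r q) * ((P q.1 q.2 ω : ℝ) - r q)) =
          fun ω => ((P q.1 q.2 ω : ℝ) - r q) ^ 2 := funext fun ω => (sq _).symm
      rw [heq]; exact (key q).2.2.1
    · exact (hindep2 q q' h).integrable_mul (key q).1 (key q').1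
  have hEprod : ∀ q q' : Fin m × Fin m,
      (∫ ω, ((P q.1 q.2 ω : ℝ) - r q) * ((P q'.1 q'.2 ω : ℝ) - r q') ∂μ) =
        if q = q' then r q else 0 := by
    intro q q'
    by_cases h : q = q'
    · subst h
      simp only [if_pos rfl]
      have heq : (fun ω => ((P q.1 q.2 ω : ℝ) - r q) * ((P q.1 q.2 ω : ℝ) - r q)) =
          fun ω => ((P q.1 q.2 ω : ℝ) - r q) ^ 2 := funext fun ω => (sq _).symm
      rw [heq]; exact (key q).2.2.2
    · rw [if_neg h]
      have := (hindep2 q q' h).integral_fun_mul_eq_mul_integral (key q).1.aestronglyMeasurable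
        (key q').1.aestronglyMeasurable
      calc (∫ ω, ((P q.1 q.2 ω : ℝ) - r q) * ((P q'.1 q'.2 ω : ℝ) - r q') ∂μ)
          = (∫ ω, ((P q.1 q.2 ω : ℝ) - r q) ∂μ) *
              (∫ ω, ((P q'.1 q'.2 ω : ℝ) - r q') ∂μ) := this
        _ = 0 := by rw [(key q).2.1, (key q').2.1, mul_zero]
  -- squared norm of a complex combination of reals
  have hsq : ∀ (a : Fin m × Fin m → ℂ) (x : Fin m × Fin m → ℝ),
      ‖∑ q : Fin m × Fin m, a q * ((x q : ℝ) : ℂ)‖ ^ 2 =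
        ∑ q : Fin m × Fin m, ∑ q' : Fin m × Fin m,
          ((a q).re * (a q').re + (a q).im * (a q').im) * (x q * x q') := by
    intro a x
    have hre : (∑ q : Fin m × Fin m, a q * ((x q : ℝ) : ℂ)).re =
        ∑ q : Fin m × Fin m, (a q).re * x q := by
      rw [Complex.re_sum]
      exact Finset.sum_congr rfl fun q _ => by simp [Complex.mul_re]
    have him : (∑ q : Fin m × Fin m, a q * ((x q : ℝ) : ℂ)).im =
        ∑ q : Fin m × Fin m, (a q).im * x q := by
      rw [Complex.im_sum]
      exact Finset.sum_congr rfl fun q _ => by simp [Complex.mul_im]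
    rw [Complex.sq_norm, Complex.normSq_apply, hre, him,
      Finset.sum_mul_sum, Finset.sum_mul_sum, ← Finset.sum_add_distrib]
    refine Finset.sum_congr rfl fun q _ => ?_
    rw [← Finset.sum_add_distrib]
    exact Finset.sum_congr rfl fun q' _ => by ring
  -- pointwise identity for the integrand
  have hfun : (fun ω => ∑ p : Fin n × Fin n,
        ‖(∑ q : Fin m × Fin m, T p q * ((c * (P q.1 q.2 ω : ℝ) : ℝ) : ℂ)) -
          ∑ q : Fin m × Fin m, T p q * ((Y q.1 q.2 : ℝ) : ℂ)‖ ^ 2) =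
      fun ω => ∑ p : Fin n × Fin n, ∑ q : Fin m × Fin m, ∑ q' : Fin m × Fin m,
        (c ^ 2 * ((T p q).re * (T p q').re + (T p q).im * (T p q').im)) *
          (((P q.1 q.2 ω : ℝ) - r q) * ((P q'.1 q'.2 ω : ℝ) - r q')) := by
    funext ω
    refine Finset.sum_congr rfl fun p _ => ?_
    rw [← Finset.sum_sub_distrib]
    have h1 : ∀ q ∈ Finset.univ (α := Fin m × Fin m),
        T p q * ((c * (P q.1 q.2 ω : ℝ) : ℝ) : ℂ) - T p q * ((Y q.1 q.2 : ℝ) : ℂ) =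
          T p q * (((c * ((P q.1 q.2 ω : ℝ) - r q) : ℝ)) : ℂ) := by
      intro q _
      rw [← mul_sub]
      congr 1
      rw [← hcr q]
      push_cast
      ring
    rw [Finset.sum_congr rfl h1, hsq (T p) (fun q => c * ((P q.1 q.2 ω : ℝ) - r q))]
    exact Finset.sum_congr rfl fun q _ => Finset.sum_congr rfl fun q' _ => by ring
  rw [hfun]
  -- integrate
  have hintK : ∀ (p : Fin n × Fin n) (q q' : Fin m × Fin m),
      Integrable (fun ω =>
        (c ^ 2 * ((T p q).re * (T p q').re + (T p q).im * (T p q').im)) *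
          (((P q.1 q.2 ω : ℝ) - r q) * ((P q'.1 q'.2 ω : ℝ) - r q'))) μ :=
    fun p q q' => (hprod q q').const_mul _
  rw [integral_finset_sum _ (fun p _ => integrable_finset_sum _
    (fun q _ => integrable_finset_sum _ (fun q' _ => hintK p q q')))]
  have hswap : ∀ p : Fin n × Fin n,
      (∫ ω, ∑ q : Fin m × Fin m, ∑ q' : Fin m × Fin m,
        (c ^ 2 * ((T p q).re * (T p q').re + (T p q).im * (T p q').im)) *
          (((P q.1 q.2 ω : ℝ) - r q) * ((P q'.1 q'.2 ω : ℝ) - r q')) ∂μ) =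
      ∑ q : Fin m × Fin m,
        (c ^ 2 * ((T p q).re * (T p q).re + (T p q).im * (T p q).im)) * r q := by
    intro p
    rw [integral_finset_sum _ (fun q _ => integrable_finset_sum _ (fun q' _ => hintK p q q'))]
    refine Finset.sum_congr rfl fun q _ => ?_
    rw [integral_finset_sum _ (fun q' _ => hintK p q q')]
    have h2 : ∀ q' ∈ Finset.univ (α := Fin m × Fin m),
        (∫ ω, (c ^ 2 * ((T p q).re * (T p q').re + (T p q).im * (T p q').im)) *
          (((P q.1 q.2 ω : ℝ) - r q) * ((P q'.1 q'.2 ω : ℝ) - r q')) ∂μ) =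
        (c ^ 2 * ((T p q).re * (T p q').re + (T p q).im * (T p q').im)) *
          (if q = q' then r q else 0) := by
      intro q' _
      rw [integral_const_mul, hEprod q q']
    rw [Finset.sum_congr rfl h2]
    simp [Finset.sum_ite_eq, mul_ite]
  rw [Finset.sum_congr rfl (fun p _ => hswap p)]
  -- final algebra
  rw [Finset.sum_comm, Fintype.sum_prod_type, Finset.mul_sum]
  refine Finset.sum_congr rfl fun k1 _ => ?_
  rw [Finset.mul_sum]
  refine Finset.sum_congr rfl fun k2 _ => ?_
  have hY : c * r (k1, k2) = Y k1 k2 := hcr (k1, k2)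
  rw [← hY, Finset.sum_mul, Finset.mul_sum]
  refine Finset.sum_congr rfl fun p _ => ?_
  rw [Complex.sq_norm, Complex.normSq_apply]
  ring
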